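/- Let n ≥ 2 be an integer and let u = (u_1,…,u_n) and v = (v_1,…,v_n) be vectors in ℝ^n with non-negative entries such that ‖u‖₁ = ‖v‖₁ = 1. Then max over pairs j ≠ k of the squared 2×2 determinant (u_j v_k − u_k v_j)² is at least ‖u − v‖₁² / (4 n⁵); i.e. there exist indices j ≠ k in {1,…,n} with (u_j v_k − u_k v_j)² ≥ (1/(4 n⁵)) (∑_{i=1}^n |u_i − v_i|)². -/

import Mathlib

/-- Lemma (gradients vs Jacobians): for `u v : Fin n → ℝ` with non-negative entries
and `‖u‖₁ = ‖v‖₁ = 1`, there exist `j ≠ k` with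
`(u j * v k - u k * v j)² ≥ ‖u - v‖₁² / (4 n⁵)`. -/
theorem stmt_0 (n : ℕ) (hn : 2 ≤ n) (u v : Fin n → ℝ)
    (hu_nonneg : ∀ i, 0 ≤ u i) (hv_nonneg : ∀ i, 0 ≤ v i)
    (hu_norm : ∑ i, |u i| = 1) (hv_norm : ∑ i, |v i| = 1) :
    ∃ j k : Fin n, j ≠ k ∧
      (1 / (4 * (n : ℝ) ^ 5)) * (∑ i, |u i - v i|) ^ 2
        ≤ (u j * v k - u k * v j) ^ 2 := by
  have hnR : (2:ℝ) ≤ (n:ℝ) := by exact_mod_cast hn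
  have hn0 : (0:ℝ) < (n:ℝ) := by linarith
  set D : ℝ := ∑ i, |u i - v i| with hD
  have hDnn : 0 ≤ D := Finset.sum_nonneg fun i _ => abs_nonneg _
  have hu1 : ∑ i, u i = 1 := by
    rw [← hu_norm]; exact Finset.sum_congr rfl fun i _ => (abs_of_nonneg (hu_nonneg i)).symm
  have hv1 : ∑ i, v i = 1 := by
    rw [← hv_norm]; exact Finset.sum_congr rfl fun i _ => (abs_of_nonneg (hv_nonneg i)).symm
  have hid : ∀ j, u j - v j = ∑ k, (u j * v k - u k * v j) := by
    intro j
    rw [Finset.sum_sub_distrib, ← Finset.mul_sum, ← Finset.sum_mul, hu1, hv1]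
    ring
  have key : ∃ j k : Fin n, j ≠ k ∧ D / (n:ℝ)^2 ≤ |u j * v k - u k * v j| := by
    by_contra h
    push_neg at h
    have hiv : Finset.Nonempty (Finset.univ : Finset (Fin n)) :=
      ⟨⟨0, by omega⟩, Finset.mem_univ _⟩
    have hbound : ∀ j : Fin n, |u j - v j| < D / (n:ℝ) := by
      intro j
      have h1 : |u j - v j| ≤ ∑ k, |u j * v k - u k * v j| := by
        rw [hid j]; exact Finset.abs_sum_le_sum_abs _ _
      have h2 : ∑ k, |u j * v k - u k * v j|
          = ∑ k ∈ Finset.univ.erase j, |u j * v k - u k * v j| := by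
        rw [Finset.sum_erase]
        simp
      have hne : (Finset.univ.erase j).Nonempty := by
        obtain ⟨k, hk⟩ := Finset.exists_mem_ne (by rw [Finset.card_univ, Fintype.card_fin]; omega) j
        exact ⟨k, Finset.mem_erase.2 ⟨hk.2, hk.1⟩⟩
      have h3 : ∑ k ∈ Finset.univ.erase j, |u j * v k - u k * v j|
          < ∑ _k ∈ Finset.univ.erase j, D / (n:ℝ)^2 := by
        apply Finset.sum_lt_sum_of_nonempty hne
        intro k hk
        exact h j k (Finset.mem_erase.1 hk).1.symm
      have h4 : ∑ _k ∈ Finset.univ.erase j, D / (n:ℝ)^2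
          = ((Finset.univ.erase j).card : ℝ) * (D / (n:ℝ)^2) := by
        rw [Finset.sum_const, nsmul_eq_mul]
      have hcard : ((Finset.univ.erase j).card : ℝ) ≤ (n:ℝ) := by
        have h := Finset.card_erase_le (s := (Finset.univ : Finset (Fin n))) (a := j)
        rw [Finset.card_univ, Fintype.card_fin] at h
        exact_mod_cast h
      have h5 : ((Finset.univ.erase j).card : ℝ) * (D / (n:ℝ)^2) ≤ (n:ℝ) * (D / (n:ℝ)^2) :=
        mul_le_mul_of_nonneg_right hcard (by positivity)
      have h6 : (n:ℝ) * (D / (n:ℝ)^2) = D / (n:ℝ) := by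
        field_simp
      calc |u j - v j| ≤ _ := h1
        _ = _ := h2
        _ < _ := h3
        _ = _ := h4
        _ ≤ _ := h5
        _ = _ := h6
    have : D < ∑ _j : Fin n, D / (n:ℝ) := by
      rw [hD]
      exact Finset.sum_lt_sum_of_nonempty hiv fun j _ => hbound j
    rw [Finset.sum_const, nsmul_eq_mul] at this
    have : D < D := by
      calc D < (n:ℝ) * (D / (n:ℝ)) := by simpa using this
        _ = D := by field_simp
    exact lt_irrefl _ this
  obtain ⟨j, k, hjk, hle⟩ := key
  refine ⟨j, k, hjk, ?_⟩
  have h1 : (D / (n:ℝ)^2) ^ 2 ≤ |u j * v k - u k * v j| ^ 2 :=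
    pow_le_pow_left₀ (by positivity) hle 2
  rw [sq_abs] at h1
  have h2 : (1 / (4 * (n:ℝ)^5)) * D ^ 2 ≤ (D / (n:ℝ)^2) ^ 2 := by
    rw [one_div, inv_mul_eq_div, div_pow,
      div_le_div_iff₀ (by positivity) (by positivity)]
    have h4 : ((n:ℝ)^2)^2 ≤ 4 * (n:ℝ)^5 := by nlinarith [pow_pos hn0 4]
    exact mul_le_mul_of_nonneg_left h4 (sq_nonneg D)
  calc (1 / (4 * (n:ℝ)^5)) * D ^ 2 ≤ _ := h2
    _ ≤ _ := h1
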